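/- A tree T has a perfect matching if and only if for every vertex v of T, the forest obtained by deleting v and its incident edges has exactly one connected component with an odd number of vertices. -/

import Mathlib

open SimpleGraph
set_option linter.unusedSectionVars false

variable {V : Type} [Fintype V] [DecidableEq V] {T : SimpleGraph V} {a b c : V}

lemma reach_del {c : V} {e : Sym2 V} (hce : c ∈ e) {x y : {u : V // u ∈ {u | u ≠ c}}}
    (h : (T.induce {u | u ≠ c}).Reachable x y) :
    (T \ fromEdgeSet {e}).Reachable x.val y.val := by
  refine Reachable.map ⟨Subtype.val, ?_⟩ h
  rintro ⟨u, hu⟩ ⟨v, hv⟩ hadj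
  rw [comap_adj] at hadj
  refine ⟨hadj, ?_⟩
  rw [fromEdgeSet_adj]
  rintro ⟨he, -⟩
  rw [Set.mem_singleton_iff] at he
  rw [← he] at hce
  rcases Sym2.mem_iff.mp hce with rfl | rfl
  · exact hu rfl
  · exact hv rfl

lemma no_reach_del (hT : T.IsTree) (hab : T.Adj a b) :
    ¬ (T \ fromEdgeSet {s(a, b)}).Reachable a b := by
  have := (isAcyclic_iff_forall_adj_isBridge.mp hT.IsAcyclic) hab
  exact isBridge_iff.mp this

def mside (T : SimpleGraph V) (a b : V) : Set V :=
  {x | ∃ (hx : x ≠ b) (ha : a ≠ b),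
    (T.induce {u | u ≠ b}).Reachable ⟨x, hx⟩ ⟨a, ha⟩}

lemma mside_disjoint (hT : T.IsTree) (hab : T.Adj a b) :
    ∀ x, x ∈ mside T a b → x ∈ mside T b a → False := by
  rintro x ⟨hxb, hab', r1⟩ ⟨hxa, hba', r2⟩
  have h1 : (T \ fromEdgeSet {s(a,b)}).Reachable x a :=
    reach_del (by simp) (x := ⟨x, hxb⟩) (y := ⟨a, hab'⟩) r1
  have h2 : (T \ fromEdgeSet {s(a,b)}).Reachable x b :=
    reach_del (by simp) (x := ⟨x, hxa⟩) (y := ⟨b, hba'⟩) r2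
  exact no_reach_del hT hab (h1.symm.trans h2)

lemma mside_cover_aux {b : V} :
    ∀ {x a : V} (_ : T.Walk x a), T.Adj a b → x ∈ mside T a b ∨ x ∈ mside T b a := by
  intro x a w
  induction w with
  | nil => exact fun hab => Or.inl ⟨hab.ne, hab.ne, Reachable.refl _⟩
  | @cons u y a' h p ih =>
    intro hab
    rcases ih hab with ⟨hyb, hab', r⟩ | ⟨hya, hba', r⟩
    · by_cases hub : u = b
      · subst hub
        exact Or.inr ⟨hab.ne', hab.ne', Reachable.refl _⟩
      · refine Or.inl ⟨hub, hab', Reachable.trans ?_ r⟩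
        exact Adj.reachable (by rw [comap_adj]; exact h)
    · by_cases hua : u = a'
      · subst hua
        exact Or.inl ⟨hab.ne, hab.ne, Reachable.refl _⟩
      · refine Or.inr ⟨hua, hba', Reachable.trans ?_ r⟩
        exact Adj.reachable (by rw [comap_adj]; exact h)

lemma mside_cover (hT : T.IsTree) (hab : T.Adj a b) :
    ∀ x, x ∈ mside T a b ∨ x ∈ mside T b a := by
  intro x
  obtain ⟨w⟩ := hT.isConnected.preconnected x a
  exact mside_cover_aux w hab

lemma nbr_aux : ∀ {x a : V} (_ : T.Walk x a) (hx : x ≠ a),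
    ∃ (b : V) (h : T.Adj a b), (T.induce {u | u ≠ a}).Reachable ⟨x, hx⟩ ⟨b, h.ne'⟩ := by
  intro x a w
  induction w with
  | nil => exact fun hx => absurd rfl hx
  | @cons u y a' h p ih =>
    intro hx
    by_cases hy : y = a'
    · subst hy
      exact ⟨u, h.symm, Reachable.refl _⟩
    · obtain ⟨b, hb, r⟩ := ih hy
      exact ⟨b, hb, Reachable.trans (Adj.reachable (by rw [comap_adj]; exact h)) r⟩

lemma nbr_in_component (hT : T.IsTree) (a : V)
    (c : ConnectedComponent (T.induce {u | u ≠ a})) :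
    ∃ (b : V) (h : T.Adj a b), (⟨b, h.ne'⟩ : {u : V // u ∈ {u | u ≠ a}}) ∈ c.supp := by
  refine c.ind ?_
  rintro ⟨x, hx⟩
  obtain ⟨w⟩ := hT.isConnected.preconnected x a
  obtain ⟨b, hb, r⟩ := nbr_aux w hx
  exact ⟨b, hb, (ConnectedComponent.sound r.symm)⟩

lemma distinct_nbrs (hT : T.IsTree) (h : T.Adj a b) {b' : V} (h' : T.Adj a b')
    (r : (T.induce {u | u ≠ a}).Reachable ⟨b, h.ne'⟩ ⟨b', h'.ne'⟩) : b = b' := by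
  by_contra hne
  have hr : (T \ fromEdgeSet {s(a,b)}).Reachable b b' :=
    reach_del (by simp) (x := ⟨b, h.ne'⟩) (y := ⟨b', h'.ne'⟩) r
  have hadj : (T \ fromEdgeSet {s(a,b)}).Adj a b' := by
    refine ⟨h', ?_⟩
    rw [fromEdgeSet_adj]
    rintro ⟨he, -⟩
    rw [Set.mem_singleton_iff, Sym2.congr_right] at he
    exact hne he.symm
  exact no_reach_del hT h (hadj.reachable.trans hr.symm)

lemma even_card_of_cond (v : V)
    (H : ∃! c : (T.induce {u | u ≠ v}).ConnectedComponent, Odd (Nat.card c.supp)) :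
    Even (Fintype.card V) := by
  obtain ⟨c₀, hc₀, hu⟩ := H
  have hodd : Odd (Nat.card {u : V | u ≠ v}) := by
    rw [← odd_ncard_oddComponents (G := T.induce {u | u ≠ v})]
    simp only [oddComponents, ← Nat.card_coe_set_eq]
    have hset : {c : (T.induce {u | u ≠ v}).ConnectedComponent | Odd (Nat.card c.supp)}
        = {c₀} := Set.ext fun c => ⟨fun h => hu c h, fun h => h ▸ hc₀⟩
    rw [hset, Nat.card_coe_set_eq, Set.ncard_singleton]
    exact odd_one
  have hcard : Nat.card {u : V | u ≠ v} = Fintype.card V - 1 := by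
    rw [Nat.card_eq_fintype_card]
    have : Fintype.card {u : V // ¬ (u = v)} = Fintype.card V - Fintype.card {u : V // u = v} :=
      Fintype.card_subtype_compl _
    rw [Fintype.card_subtype_eq] at this
    exact this
  rw [hcard] at hodd
  obtain ⟨k, hk⟩ := hodd
  have hpos : 0 < Fintype.card V := Fintype.card_pos_iff.mpr ⟨v⟩
  refine ⟨k + 1, by omega⟩

lemma card_mside_add (hT : T.IsTree) (hab : T.Adj a b) :
    Nat.card (mside T a b) + Nat.card (mside T b a) = Fintype.card V := by
  have hD : Disjoint (mside T a b) (mside T b a) :=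
    Set.disjoint_left.mpr fun x hx hx' => mside_disjoint hT hab x hx hx'
  have hU : mside T a b ∪ mside T b a = Set.univ :=
    Set.eq_univ_of_forall fun x => (mside_cover hT hab x).elim Or.inl Or.inr
  rw [Nat.card_coe_set_eq, Nat.card_coe_set_eq,
    ← Set.ncard_union_eq hD (Set.toFinite _) (Set.toFinite _), hU, Set.ncard_univ,
    Nat.card_eq_fintype_card]

lemma mside_eq_image (h : a ≠ b) :
    mside T a b = Subtype.val ''
      (((T.induce {u | u ≠ b}).connectedComponentMk ⟨a, h⟩).supp) := by
  ext x
  constructor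
  · rintro ⟨hx, ha, hr⟩
    exact ⟨⟨x, hx⟩, ConnectedComponent.sound hr, rfl⟩
  · rintro ⟨⟨y, hy⟩, hmem, rfl⟩
    exact ⟨hy, h, (ConnectedComponent.eq).mp hmem⟩

lemma card_mside (h : a ≠ b) :
    Nat.card (mside T a b) =
      Nat.card (((T.induce {u | u ≠ b}).connectedComponentMk ⟨a, h⟩).supp) := by
  rw [mside_eq_image h, Nat.card_coe_set_eq, Nat.card_coe_set_eq,
    Set.ncard_image_of_injective _ Subtype.val_injective]

/-- The matching subgraph: edges whose removal splits into two odd halves. -/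
def oddM (T : SimpleGraph V) : T.Subgraph where
  verts := Set.univ
  Adj x y := T.Adj x y ∧ Odd (Nat.card (mside T x y)) ∧ Odd (Nat.card (mside T y x))
  adj_sub h := h.1
  edge_vert _ := trivial
  symm := ⟨fun x y h => ⟨h.1.symm, h.2.2, h.2.1⟩⟩

lemma oddM_isPerfectMatching (hT : T.IsTree)
    (H : ∀ v : V, ∃! c : (T.induce {u | u ≠ v}).ConnectedComponent,
      Odd (Nat.card c.supp)) :
    (oddM T).IsPerfectMatching := by
  constructor
  · intro a _
    obtain ⟨c, hcodd, hcu⟩ := H a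
    obtain ⟨b, hab, hbc⟩ := nbr_in_component hT a c
    have hEven : Even (Fintype.card V) := even_card_of_cond a (H a)
    have hmkb : (T.induce {u | u ≠ a}).connectedComponentMk ⟨b, hab.ne'⟩ = c := hbc
    have hba_odd : Odd (Nat.card (mside T b a)) := by
      rw [card_mside hab.ne', hmkb]; exact hcodd
    have hab_odd : Odd (Nat.card (mside T a b)) := by
      have hsum := card_mside_add hT hab
      obtain ⟨k, hk⟩ := hba_odd
      obtain ⟨m, hm⟩ := hEven
      rcases Nat.even_or_odd (Nat.card (mside T a b)) with he | ho
      · obtain ⟨j, hj⟩ := he; omega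
      · exact ho
    refine ⟨b, ⟨hab, hab_odd, hba_odd⟩, ?_⟩
    rintro b' ⟨hab', -, hb'a_odd⟩
    rw [card_mside hab'.ne'] at hb'a_odd
    have : (T.induce {u | u ≠ a}).connectedComponentMk ⟨b', hab'.ne'⟩ = c :=
      hcu _ hb'a_odd
    have hr : (T.induce {u | u ≠ a}).Reachable ⟨b, hab.ne'⟩ ⟨b', hab'.ne'⟩ :=
      ConnectedComponent.exact (hmkb.trans this.symm)
    exact (distinct_nbrs hT hab hab' hr).symm
  · intro v; trivial

lemma forward_dir {M : T.Subgraph} (hM : M.IsPerfectMatching) (v : V) :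
    ∃! c : (T.induce {u | u ≠ v}).ConnectedComponent, Odd (Nat.card c.supp) := by
  classical
  obtain ⟨w, hw, hwu⟩ := (Subgraph.isPerfectMatching_iff.mp hM) v
  have hwv : w ≠ v := (M.adj_sub hw).ne'
  set G' := T.induce {u : V | u ≠ v} with hG'
  set c₀ : G'.ConnectedComponent := G'.connectedComponentMk ⟨w, hwv⟩ with hc₀
  -- claim (i)
  have claim1 : ∀ c : G'.ConnectedComponent, (⟨w, hwv⟩ : {u : V | u ≠ v}) ∉ c.supp →
      Even (Nat.card c.supp) := by
    intro c hwc
    set s : Set V := Subtype.val '' c.supp with hs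
    have hmatch : (M.induce s).IsMatching := by
      rintro x hx
      obtain ⟨⟨x, hxv⟩, hxc, rfl⟩ := hx
      obtain ⟨y, hy, hyu⟩ := (Subgraph.isPerfectMatching_iff.mp hM) x
      have hyv : y ≠ v := by
        rintro rfl
        have : x = w := hwu x hy.symm
        subst this
        exact hwc hxc
      have hyc : (⟨y, hyv⟩ : {u : V | u ≠ v}) ∈ c.supp := by
        rw [ConnectedComponent.mem_supp_iff, ← hxc]
        exact ConnectedComponent.connectedComponentMk_eq_of_adj
          (by rw [hG', comap_adj]; exact (M.adj_sub hy).symm)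
      refine ⟨y, ⟨⟨⟨⟨x, hxv⟩, hxc, rfl⟩, ⟨⟨y, hyv⟩, hyc, rfl⟩, hy⟩, ?_⟩⟩
      rintro z ⟨-, -, hz⟩
      exact hyu z hz
    haveI : Fintype ↑(M.induce s).verts := Fintype.ofFinite _
    have heven : Even (Nat.card ↑(M.induce s).verts) := by
      rw [Nat.card_eq_fintype_card, ← Set.toFinset_card]
      exact hmatch.even_card
    have h2 : Nat.card ↑(M.induce s).verts = Nat.card c.supp := by
      have hv : (M.induce s).verts = s := rfl
      rw [hv, Nat.card_coe_set_eq, hs,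
        Set.ncard_image_of_injective _ Subtype.val_injective, ← Nat.card_coe_set_eq]
    rwa [h2] at heven
  -- claim (ii)
  have claim2 : Odd (Nat.card c₀.supp) := by
    set s : Set V := Subtype.val '' c₀.supp with hs
    have hvs : v ∉ s := by
      rintro ⟨⟨y, hyv⟩, -, h⟩
      exact hyv h
    have hws : w ∈ s := ⟨⟨w, hwv⟩, rfl, rfl⟩
    have hmatch : (M.induce (insert v s)).IsMatching := by
      rintro x hx
      rcases hx with rfl | hx
      · refine ⟨w, ⟨⟨Set.mem_insert _ _, Set.mem_insert_of_mem _ hws, hw⟩, ?_⟩⟩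
        rintro z ⟨-, -, hz⟩
        exact hwu z hz
      · obtain ⟨⟨x, hxv⟩, hxc, rfl⟩ := hx
        obtain ⟨y, hy, hyu⟩ := (Subgraph.isPerfectMatching_iff.mp hM) x
        have hys : y ∈ insert v s := by
          by_cases hyv : y = v
          · exact hyv ▸ Set.mem_insert _ _
          · refine Set.mem_insert_of_mem _ ⟨⟨y, hyv⟩, ?_, rfl⟩
            rw [ConnectedComponent.mem_supp_iff, ← hxc]
            exact ConnectedComponent.connectedComponentMk_eq_of_adj
              (by rw [hG', comap_adj]; exact (M.adj_sub hy).symm)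
        refine ⟨y, ⟨⟨Set.mem_insert_of_mem _ ⟨⟨x, hxv⟩, hxc, rfl⟩, hys, hy⟩, ?_⟩⟩
        rintro z ⟨-, -, hz⟩
        exact hyu z hz
    haveI : Fintype ↑(M.induce (insert v s)).verts := Fintype.ofFinite _
    have heven : Even (Nat.card ↑(M.induce (insert v s)).verts) := by
      rw [Nat.card_eq_fintype_card, ← Set.toFinset_card]
      exact hmatch.even_card
    have h2 : Nat.card ↑(M.induce (insert v s)).verts = s.ncard + 1 := by
      have hv : (M.induce (insert v s)).verts = insert v s := rfl
      rw [hv, Nat.card_coe_set_eq, Set.ncard_insert_of_notMem hvs (Set.toFinite _)]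
    rw [h2] at heven
    have h3 : Nat.card c₀.supp = s.ncard := by
      rw [Nat.card_coe_set_eq, hs, Set.ncard_image_of_injective _ Subtype.val_injective,
        ← Nat.card_coe_set_eq, Nat.card_coe_set_eq]
    rw [h3]
    rcases Nat.even_or_odd s.ncard with he | ho
    · obtain ⟨k, hk⟩ := he; obtain ⟨m, hm⟩ := heven; omega
    · exact ho
  refine ⟨c₀, claim2, ?_⟩
  intro c hc
  by_contra hne
  have hwc : (⟨w, hwv⟩ : {u : V | u ≠ v}) ∉ c.supp := by
    rw [ConnectedComponent.mem_supp_iff]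
    intro h
    exact hne (by rw [← h, hc₀])
  exact (Nat.not_even_iff_odd.mpr hc) (claim1 c hwc)

theorem tree_perfect_matching_iff (V : Type) [Fintype V] [DecidableEq V]
    (T : SimpleGraph V) (hT : T.IsTree) :
    (∃ M : T.Subgraph, M.IsPerfectMatching) ↔
      ∀ v : V, ∃! c : (T.induce {u | u ≠ v}).ConnectedComponent, Odd (Nat.card c.supp) := by
  constructor
  · rintro ⟨M, hM⟩ v
    exact forward_dir hM v
  · intro H
    exact ⟨oddM T, oddM_isPerfectMatching hT H⟩
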